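/- Let G be a finite simple graph on n vertices with adjacency matrix A, let R be a k×n random matrix with independent standard Gaussian N(0,1) entries, and define Y = Σ_{(u,v): A_{uv}=1} ⟨R·A_u, R·A_v⟩ (sum over ordered adjacent pairs). Then Var(Y) = 2·k·Σ_{i,j=1}^n ((A³)_{ij})² = 2·k·Tr(A⁶), i.e., Var(Y) equals 2k times the number of closed walks of length 6 in G. -/

import Mathlib

open MeasureTheory ProbabilityTheory Real
open scoped ENNReal NNReal

noncomputable def gE (x : ℝ) : ℝ := Real.exp (-x ^ 2 / 2)


lemma integrable_pow_gE (p : ℕ) : Integrable (fun x : ℝ => x ^ p * gE x) := by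
  have hb : (0:ℝ) < 1/4 := by norm_num
  refine Integrable.mono' ((integrable_exp_neg_mul_sq hb).const_mul (1 + p.factorial * 4 ^ p)) ?_ ?_
  · exact ((continuous_pow p).mul (by unfold gE; exact Real.continuous_exp.comp ((continuous_pow 2).neg.div_const 2) : Continuous gE)).aestronglyMeasurable
  · refine Filter.Eventually.of_forall fun x => ?_
    have h1 : |x| ^ p ≤ 1 + p.factorial * 4 ^ p * Real.exp (x^2/4) := by
      rcases le_or_gt (|x|) 1 with h | h
      · have : |x| ^ p ≤ 1 := pow_le_one₀ (abs_nonneg x) h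
        nlinarith [this, (by positivity : (0:ℝ) < (p.factorial : ℝ) * 4 ^ p * Real.exp (x^2/4))]
      · have h2 : |x| ^ p ≤ |x| ^ (2*p) := by
          apply pow_le_pow_right₀ h.le; omega
        have h3 : (x^2/4) ^ p / p.factorial ≤ Real.exp (x^2/4) :=
          Real.pow_div_factorial_le_exp (x ^ 2 / 4) (by positivity) p
        have h4 : |x| ^ (2*p) = (x^2)^p := by
          rw [pow_mul, sq_abs]
        have h5 : (x^2)^p ≤ p.factorial * 4^p * Real.exp (x^2/4) := by
          have : (x^2/4)^p = (x^2)^p / 4^p := div_pow _ _ _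
          rw [this] at h3
          have hf : (0:ℝ) < p.factorial := by positivity
          have h4p : (0:ℝ) < 4^p := by positivity
          calc (x^2)^p = ((x^2)^p / 4^p / p.factorial) * (p.factorial * 4^p) := by
                field_simp
            _ ≤ Real.exp (x^2/4) * (p.factorial * 4^p) := by
                apply mul_le_mul_of_nonneg_right h3 (by positivity)
            _ = p.factorial * 4^p * Real.exp (x^2/4) := by ring
        linarith [Real.exp_pos (x^2/4)]
    have hx : ‖x ^ p * gE x‖ = |x|^p * Real.exp (-x^2/2) := by
      rw [norm_mul, norm_pow, Real.norm_eq_abs, Real.norm_eq_abs, gE,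
        abs_of_pos (Real.exp_pos _)]
    rw [hx]
    have : |x|^p * Real.exp (-x^2/2) ≤ (1 + p.factorial * 4^p * Real.exp (x^2/4)) * Real.exp (-x^2/2) := by
      apply mul_le_mul_of_nonneg_right h1 (Real.exp_pos _).le
    refine this.trans ?_
    rw [add_mul, one_mul, mul_assoc, ← Real.exp_add]
    have e1 : Real.exp (-x^2/2) ≤ Real.exp (-(1/4) * x^2) :=
      Real.exp_le_exp.mpr (by nlinarith [sq_nonneg x])
    have e2 : Real.exp (x^2/4 + -x^2/2) = Real.exp (-(1/4) * x^2) := by ring_nf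
    rw [e2]
    have hfp : (0:ℝ) ≤ p.factorial * 4^p := by positivity
    nlinarith [Real.exp_pos (-(1/4) * x^2)]

noncomputable def gI (p : ℕ) : ℝ := ∫ x : ℝ, x ^ p * gE x

lemma gE_hasDeriv (x : ℝ) : HasDerivAt (fun y : ℝ => -gE y) (x * gE x) x := by
  have h1 : HasDerivAt (fun y : ℝ => -y ^ 2 / 2) (-x) x := by
    have := ((hasDerivAt_pow 2 x).neg).div_const 2
    refine this.congr_deriv ?_
    norm_num
    ring
  have h2 := h1.exp
  have h3 := h2.neg
  refine h3.congr_deriv ?_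
  unfold gE
  ring

lemma gI_zero : gI 0 = Real.sqrt (2 * Real.pi) := by
  unfold gI gE
  have : ∀ x : ℝ, x ^ 0 * Real.exp (-x ^ 2 / 2) = Real.exp (-(1/2) * x ^ 2) := by
    intro x; rw [pow_zero, one_mul]; congr 1; ring
  rw [integral_congr_ae (Filter.Eventually.of_forall this), integral_gaussian]
  congr 1
  rw [div_div_eq_mul_div]
  ring

lemma gI_one : gI 1 = 0 := by
  have h := integral_mul_deriv_eq_deriv_mul_of_integrable
    (u := fun _ : ℝ => (1:ℝ)) (u' := fun _ => 0) (v := fun y => -gE y) (v' := fun x => x * gE x)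
    (fun x _ => hasDerivAt_const x 1) (fun x _ => gE_hasDeriv x)
    ?_ ?_ ?_
  · unfold gI
    have e : ∀ x : ℝ, x ^ 1 * gE x = (fun _ : ℝ => (1:ℝ)) x * (fun x => x * gE x) x := by
      intro x; simp [pow_one]
    rw [integral_congr_ae (Filter.Eventually.of_forall e)]
    rw [h]
    simp
  · have := integrable_pow_gE 1
    apply this.congr
    refine Filter.Eventually.of_forall fun x => ?_
    simp [pow_one]
  · simp only [Pi.mul_def, zero_mul]
    exact (integrable_zero _ _ _).congr (Filter.Eventually.of_forall fun x => by simp)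
  · have := integrable_pow_gE 0
    apply (this.neg).congr
    refine Filter.Eventually.of_forall fun x => ?_
    simp [pow_zero]

lemma gI_rec (p : ℕ) : gI (p + 2) = (p + 1) * gI p := by
  have h := integral_mul_deriv_eq_deriv_mul_of_integrable
    (u := fun y : ℝ => y ^ (p+1)) (u' := fun y => (p+1) * y ^ p)
    (v := fun y => -gE y) (v' := fun x => x * gE x)
    (fun x _ => by simpa using hasDerivAt_pow (p+1) x) (fun x _ => gE_hasDeriv x)
    ?_ ?_ ?_
  · unfold gI
    have e1 : ∀ x : ℝ, x ^ (p+2) * gE x = (fun y : ℝ => y ^ (p+1)) x * (fun x => x * gE x) x := by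
      intro x; simp; ring
    rw [integral_congr_ae (Filter.Eventually.of_forall e1), h]
    have e2 : ∀ x : ℝ, (fun y : ℝ => (p+1 :ℝ) * y ^ p) x * (fun y => -gE y) x
        = -((p+1 : ℝ) * (x ^ p * gE x)) := by intro x; simp; ring
    rw [integral_congr_ae (Filter.Eventually.of_forall e2), integral_neg, MeasureTheory.integral_const_mul]
    ring
  · apply (integrable_pow_gE (p+2)).congr
    refine Filter.Eventually.of_forall fun x => ?_
    simp [Pi.mul_def]; ring
  · apply (((integrable_pow_gE p).const_mul ((p:ℝ)+1)).neg).congr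
    refine Filter.Eventually.of_forall fun x => ?_
    simp [Pi.mul_def]; ring
  · apply ((integrable_pow_gE (p+1)).neg).congr
    refine Filter.Eventually.of_forall fun x => ?_
    simp [Pi.mul_def]

noncomputable def gm (p : ℕ) : ℝ := ∫ x, x ^ p ∂(gaussianReal 0 1)

lemma gaussianReal_eq_withDensity : gaussianReal 0 1 =
    MeasureTheory.volume.withDensity fun x => ((gaussianPDFReal 0 1 x).toNNReal : ℝ≥0∞) := by
  rw [gaussianReal_of_var_ne_zero 0 one_ne_zero]
  rfl

lemma pdf_eq (x : ℝ) : gaussianPDFReal 0 1 x = (Real.sqrt (2 * Real.pi))⁻¹ * gE x := by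
  unfold gaussianPDFReal gE
  norm_num

lemma integral_gaussianReal_eq (f : ℝ → ℝ) :
    ∫ x, f x ∂(gaussianReal 0 1) = (Real.sqrt (2 * Real.pi))⁻¹ * ∫ x, f x * gE x := by
  rw [gaussianReal_eq_withDensity,
    integral_withDensity_eq_integral_smul ((measurable_gaussianPDFReal 0 1).real_toNNReal) f]
  have e : ∀ x : ℝ, (gaussianPDFReal 0 1 x).toNNReal • f x
      = (Real.sqrt (2 * Real.pi))⁻¹ * (f x * gE x) := by
    intro x
    rw [NNReal.smul_def, Real.coe_toNNReal _ (gaussianPDFReal_nonneg 0 1 x), smul_eq_mul, pdf_eq]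
    ring
  rw [integral_congr_ae (Filter.Eventually.of_forall e), MeasureTheory.integral_const_mul]

lemma integrable_pow_gaussianReal (p : ℕ) :
    Integrable (fun x => x ^ p) (gaussianReal 0 1) := by
  rw [gaussianReal_eq_withDensity,
    integrable_withDensity_iff_integrable_smul ((measurable_gaussianPDFReal 0 1).real_toNNReal)]
  apply ((integrable_pow_gE p).const_mul ((Real.sqrt (2 * Real.pi))⁻¹)).congr
  refine Filter.Eventually.of_forall fun x => ?_
  show (Real.sqrt (2 * Real.pi))⁻¹ * (x ^ p * gE x) = (gaussianPDFReal 0 1 x).toNNReal • x ^ p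
  rw [NNReal.smul_def, Real.coe_toNNReal _ (gaussianPDFReal_nonneg 0 1 x), smul_eq_mul, pdf_eq]
  ring

lemma gm_def (p : ℕ) : gm p = (Real.sqrt (2 * Real.pi))⁻¹ * gI p := by
  unfold gm gI
  exact integral_gaussianReal_eq (fun x => x ^ p)

lemma sqrt_two_pi_pos : (0:ℝ) < Real.sqrt (2 * Real.pi) :=
  Real.sqrt_pos.mpr (by positivity)

lemma gm_zero : gm 0 = 1 := by
  rw [gm_def, gI_zero, inv_mul_cancel₀ sqrt_two_pi_pos.ne']

lemma gm_one : gm 1 = 0 := by rw [gm_def, gI_one, mul_zero]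

lemma gm_two : gm 2 = 1 := by
  have := gI_rec 0
  rw [gm_def, this, gI_zero]
  push_cast
  rw [zero_add, one_mul, inv_mul_cancel₀ sqrt_two_pi_pos.ne']

lemma gm_three : gm 3 = 0 := by
  have := gI_rec 1
  rw [gm_def, this, gI_one]
  simp

lemma gm_four : gm 4 = 3 := by
  have h2 := gI_rec 2
  have h0 := gI_rec 0
  rw [gm_def, h2, h0, gI_zero]
  push_cast
  rw [zero_add, one_mul]
  field_simp
  norm_num

section Pi

variable {ι : Type*} [Fintype ι] [DecidableEq ι]

local notation "μπ" => MeasureTheory.Measure.pi (fun _ : ι => gaussianReal 0 1)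

lemma integral_pi_gauss_prod (f : ι → ℝ → ℝ) :
    ∫ R : ι → ℝ, ∏ i, f i (R i) ∂(MeasureTheory.Measure.pi (fun _ : ι => gaussianReal 0 1))
      = ∏ i, ∫ x, f i x ∂(gaussianReal 0 1) := by
  letI : MeasureSpace ℝ := ⟨gaussianReal 0 1⟩
  haveI : SigmaFinite (volume : Measure ℝ) := by
    show SigmaFinite (gaussianReal 0 1)
    infer_instance
  have h := MeasureTheory.integral_fintype_prod_eq_prod (𝕜 := ℝ) (E := fun _ : ι => ℝ) f (μ := fun _ => gaussianReal 0 1)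
  have hv : (volume : Measure (ι → ℝ)) = MeasureTheory.Measure.pi (fun _ : ι => gaussianReal 0 1) := by
    rw [MeasureTheory.volume_pi]; rfl
  exact h

lemma integrable_pi_gauss_prod (f : ι → ℝ → ℝ) (hf : ∀ i, Integrable (f i) (gaussianReal 0 1)) :
    Integrable (fun R : ι → ℝ => ∏ i, f i (R i))
      (MeasureTheory.Measure.pi (fun _ : ι => gaussianReal 0 1)) := by
  letI : MeasureSpace ℝ := ⟨gaussianReal 0 1⟩
  haveI : SigmaFinite (volume : Measure ℝ) := by
    show SigmaFinite (gaussianReal 0 1)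
    infer_instance
  have h := MeasureTheory.Integrable.fintype_prod (𝕜 := ℝ) (f := f) (fun i => hf i)
  have hv : (volume : Measure (ι → ℝ)) = MeasureTheory.Measure.pi (fun _ : ι => gaussianReal 0 1) := by
    rw [MeasureTheory.volume_pi]; rfl
  exact h

end Pi

section Mon

variable {ι : Type*} [Fintype ι] [DecidableEq ι]

/-- indicator exponent -/
def eind (a i : ι) : ℕ := if i = a then 1 else 0

lemma prod_pow_eind (R : ι → ℝ) (a : ι) : ∏ i, R i ^ eind a i = R a := by
  have : ∀ i ∈ Finset.univ, R i ^ eind a i = if i = a then R i else 1 := by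
    intro i _
    unfold eind
    split <;> simp
  rw [Finset.prod_congr rfl this, Finset.prod_ite_eq' Finset.univ a (fun i => R i)]
  simp

lemma prod_pow_add (R : ι → ℝ) (m₁ m₂ : ι → ℕ) :
    ∏ i, R i ^ (m₁ i + m₂ i) = (∏ i, R i ^ m₁ i) * ∏ i, R i ^ m₂ i := by
  simp [pow_add, Finset.prod_mul_distrib]

lemma mul2 (R : ι → ℝ) (a b : ι) : R a * R b = ∏ i, R i ^ (eind a i + eind b i) := by
  rw [prod_pow_add, prod_pow_eind, prod_pow_eind]

lemma mul4 (R : ι → ℝ) (a b c d : ι) :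
    R a * R b * R c * R d = ∏ i, R i ^ (eind a i + eind b i + eind c i + eind d i) := by
  rw [prod_pow_add, prod_pow_add, prod_pow_add, prod_pow_eind, prod_pow_eind, prod_pow_eind,
    prod_pow_eind]

lemma integral_pi_mon (m : ι → ℕ) :
    ∫ R : ι → ℝ, ∏ i, R i ^ m i ∂(MeasureTheory.Measure.pi (fun _ : ι => gaussianReal 0 1))
      = ∏ i, gm (m i) :=
  integral_pi_gauss_prod (fun i x => x ^ m i)

lemma integrable_pi_mon (m : ι → ℕ) :
    Integrable (fun R : ι → ℝ => ∏ i, R i ^ m i)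
      (MeasureTheory.Measure.pi (fun _ : ι => gaussianReal 0 1)) :=
  integrable_pi_gauss_prod _ (fun i => integrable_pow_gaussianReal (m i))

lemma integrable_mul2 (a b : ι) :
    Integrable (fun R : ι → ℝ => R a * R b)
      (MeasureTheory.Measure.pi (fun _ : ι => gaussianReal 0 1)) := by
  apply (integrable_pi_mon (fun i => eind a i + eind b i)).congr
  exact Filter.Eventually.of_forall fun R => (mul2 R a b).symm

lemma integrable_mul4 (a b c d : ι) :
    Integrable (fun R : ι → ℝ => R a * R b * R c * R d)
      (MeasureTheory.Measure.pi (fun _ : ι => gaussianReal 0 1)) := by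
  apply (integrable_pi_mon (fun i => eind a i + eind b i + eind c i + eind d i)).congr
  exact Filter.Eventually.of_forall fun R => (mul4 R a b c d).symm

lemma prod_gm_restrict (m : ι → ℕ) (s : Finset ι) (h : ∀ i ∉ s, m i = 0) :
    ∏ i, gm (m i) = ∏ i ∈ s, gm (m i) := by
  refine (Finset.prod_subset s.subset_univ ?_).symm
  intro i _ hi
  rw [h i hi, gm_zero]

lemma E2 (a b : ι) :
    ∫ R : ι → ℝ, R a * R b ∂(MeasureTheory.Measure.pi (fun _ : ι => gaussianReal 0 1))
      = if a = b then 1 else 0 := by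
  rw [integral_congr_ae (Filter.Eventually.of_forall fun R => mul2 R a b), integral_pi_mon]
  by_cases h : a = b
  · subst h
    rw [prod_gm_restrict _ {a} (by intro i hi; simp only [Finset.mem_singleton] at hi; simp [eind, hi])]
    rw [Finset.prod_singleton]
    simp [eind, gm_two]
  · rw [prod_gm_restrict _ {a, b} (by intro i hi; simp only [Finset.mem_insert, Finset.mem_singleton, not_or] at hi; simp [eind, hi.1, hi.2])]
    rw [Finset.prod_insert (by simpa using h), Finset.prod_singleton]
    simp [eind, h, Ne.symm h, gm_one]

lemma E4 (a b c d : ι) :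
    ∫ R : ι → ℝ, R a * R b * R c * R d
        ∂(MeasureTheory.Measure.pi (fun _ : ι => gaussianReal 0 1))
      = (if a = b then (1:ℝ) else 0) * (if c = d then 1 else 0)
        + (if a = c then (1:ℝ) else 0) * (if b = d then 1 else 0)
        + (if a = d then (1:ℝ) else 0) * (if b = c then 1 else 0) := by
  rw [integral_congr_ae (Filter.Eventually.of_forall fun R => mul4 R a b c d), integral_pi_mon]
  by_cases hab : a = b
  · subst hab
    by_cases hcd : c = d
    · subst hcd
      by_cases hac : a = c
      · subst hac
        rw [prod_gm_restrict _ {a} (by intro i hi; simp only [Finset.mem_singleton] at hi; simp [eind, hi])]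
        simp [eind, gm_four]
        norm_num
      · rw [prod_gm_restrict _ {a, c} (by intro i hi; simp only [Finset.mem_insert, Finset.mem_singleton, not_or] at hi; simp [eind, hi.1, hi.2])]
        rw [Finset.prod_insert (by simpa using hac), Finset.prod_singleton]
        simp [eind, hac, Ne.symm hac, gm_two]
    · -- a = b, c ≠ d : both sides zero; coordinate c has odd multiplicity
      have hz : gm (eind a c + eind a c + eind c c + eind d c) = 0 := by
        by_cases h : c = a
        · have had : ¬ a = d := fun hh => hcd (h.trans hh)
          simp [eind, h, had, hcd, gm_three]
        · simp [eind, h, hcd, gm_one]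
      rw [Finset.prod_eq_zero (Finset.mem_univ c) hz]
      have h1 : ¬ (a = c ∧ a = d) := by rintro ⟨h1, h2⟩; exact hcd (h1 ▸ h2.symm ▸ rfl)
      by_cases hac : a = c
      · have had : ¬ a = d := fun h => h1 ⟨hac, h⟩
        simp [hcd, hac, had]
      · by_cases had : a = d
        · simp [hcd, hac, had, (Ne.symm hcd : ¬ d = c)]
        · simp [hcd, hac, had]
  · by_cases hcd : c = d
    · subst hcd
      -- a ≠ b, c = c : coordinate a has odd multiplicity
      have hz : gm (eind a a + eind b a + eind c a + eind c a) = 0 := by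
        by_cases h : a = c
        · have hcb : ¬ c = b := fun hh => hab (h.trans hh)
          simp [eind, Ne.symm hab, h, hcb, hab, gm_three]
        · simp [eind, Ne.symm hab, h, hab, gm_one]
      rw [Finset.prod_eq_zero (Finset.mem_univ a) hz]
      by_cases hac : a = c
      · have hbc : ¬ b = c := fun h => hab (hac.trans h.symm)
        simp [hab, hac, hbc, (show ¬ c = b from fun h => hbc h.symm)]
      · simp [hab, hac]
    · by_cases hac : a = c
      · subst hac
        by_cases hbd : b = d
        · subst hbd
          rw [prod_gm_restrict _ {a, b} (by intro i hi; simp only [Finset.mem_insert, Finset.mem_singleton, not_or] at hi; simp [eind, hi.1, hi.2])]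
          rw [Finset.prod_insert (by simpa using hab), Finset.prod_singleton]
          have hba : ¬ b = a := fun h => hab h.symm
          simp [eind, hab, hba, hcd, Ne.symm hab, gm_two]
        · -- coordinate b odd
          have hz : gm (eind a b + eind b b + eind a b + eind d b) = 0 := by
            have hba : ¬ b = a := fun h => hab h.symm
            have hbd' : ¬ b = d := hbd
            simp [eind, hba, hbd', gm_one]
          rw [Finset.prod_eq_zero (Finset.mem_univ b) hz]
          have had : ¬ a = d := fun h => hcd h
          simp [hab, hbd, had]
      · by_cases had : a = d
        · subst had
          by_cases hbc : b = c
          · subst hbc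
            rw [prod_gm_restrict _ {a, b} (by intro i hi; simp only [Finset.mem_insert, Finset.mem_singleton, not_or] at hi; simp [eind, hi.1, hi.2])]
            rw [Finset.prod_insert (by simpa using hab), Finset.prod_singleton]
            have hba : ¬ b = a := fun h => hab h.symm
            simp [eind, hab, hba, Ne.symm hab, gm_two]
          · -- coordinate b odd
            have hz : gm (eind a b + eind b b + eind c b + eind a b) = 0 := by
              have hba : ¬ b = a := fun h => hab h.symm
              simp [eind, hba, hbc, gm_one]
            rw [Finset.prod_eq_zero (Finset.mem_univ b) hz]
            simp [hab, hac, hbc]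
        · -- coordinate a odd
          have hz : gm (eind a a + eind b a + eind c a + eind d a) = 0 := by
            have h1 : ¬ a = b := hab
            simp [eind, hab, Ne.symm hab, hac, had,
              (show ¬ c = a from fun h => hac h.symm),
              (show ¬ d = a from fun h => had h.symm), gm_one]
          rw [Finset.prod_eq_zero (Finset.mem_univ a) hz]
          simp [hab, hac, had]

end Mon

lemma swap5 {W U : Type*} [Fintype W] [Fintype U] (F : W → W → U → W → W → ℝ) :
    (∑ u, ∑ v, ∑ l, ∑ i, ∑ j, F u v l i j) = ∑ l, ∑ i, ∑ j, ∑ u, ∑ v, F u v l i j := by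
  have h1 : (∑ u, ∑ v, ∑ l, ∑ i, ∑ j, F u v l i j)
      = ∑ p : W × W × U × W × W, F p.1 p.2.1 p.2.2.1 p.2.2.2.1 p.2.2.2.2 := by
    simp only [Fintype.sum_prod_type]
  have h2 : (∑ l, ∑ i, ∑ j, ∑ u, ∑ v, F u v l i j)
      = ∑ q : U × W × W × W × W, F q.2.2.2.1 q.2.2.2.2 q.1 q.2.1 q.2.2.1 := by
    simp only [Fintype.sum_prod_type]
  rw [h1, h2]
  exact Fintype.sum_equiv
    ⟨fun p => (p.2.2.1, p.2.2.2.1, p.2.2.2.2, p.1, p.2.1),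
     fun q => (q.2.2.2.1, q.2.2.2.2, q.1, q.2.1, q.2.2.1),
     fun _ => rfl, fun _ => rfl⟩ _ _ (fun p => rfl)

/-- With `A` the adjacency matrix of a finite simple graph `G` and `R`
a `k × n` random matrix with independent standard Gaussian `N(0,1)` entries, the random
variable `Y = Σ_{(u,v) adjacent} ⟨R·A_u, R·A_v⟩` satisfies
`Var(Y) = 2·k·Σ_{i,j} ((A³)_{ij})² = 2·k·Tr(A⁶)` (= `2k` times the number of closed walks
of length 6 in `G`). -/
theorem random_projection_triangle_variance
    {V : Type*} [Fintype V] [DecidableEq V]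
    (G : SimpleGraph V) [DecidableRel G.Adj]
    (A : Matrix V V ℝ) (hA : A = G.adjMatrix ℝ)
    (k : ℕ)
    (μ : Measure (Fin k × V → ℝ))
    (hμ : μ = Measure.pi fun _ : Fin k × V => gaussianReal 0 1)
    (Y : (Fin k × V → ℝ) → ℝ)
    (hY : ∀ R : Fin k × V → ℝ, Y R = ∑ u : V, ∑ v : V,
      if G.Adj u v then
        ∑ l : Fin k, (∑ i : V, R (l, i) * A i u) * (∑ j : V, R (l, j) * A j v)
      else 0) :
    variance Y μ = 2 * (k : ℝ) * ∑ i : V, ∑ j : V, ((A ^ 3) i j) ^ 2 ∧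
      variance Y μ = 2 * (k : ℝ) * Matrix.trace (A ^ 6) := by
  subst hμ
  set ν := Measure.pi fun _ : Fin k × V => gaussianReal 0 1 with hν
  haveI : IsProbabilityMeasure ν := by rw [hν]; infer_instance
  -- symmetry of A
  have hsymA : ∀ i j, A i j = A j i := by
    intro i j; rw [hA]
    simp only [SimpleGraph.adjMatrix_apply]
    exact if_congr (G.adj_comm i j) rfl rfl
  set B : V → V → ℝ := fun i j => (A ^ 3) i j with hB
  have h3 : A ^ 3 = A * A * A := by
    rw [pow_succ, pow_succ, pow_one]
  have hB2 : ∀ i j, B i j = ∑ u, ∑ v, A i u * (A u v * A j v) := by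
    intro i j
    rw [hB]
    simp only [h3, Matrix.mul_apply]
    rw [Finset.sum_comm]
    refine Finset.sum_congr rfl fun u _ => ?_
    rw [Finset.sum_mul]
    refine Finset.sum_congr rfl fun v _ => ?_
    rw [hsymA u j]
    ring
  have hBsym : ∀ i j, B i j = B j i := by
    intro i j
    have hAT : Matrix.transpose A = A := by rw [hA]; exact SimpleGraph.transpose_adjMatrix G
    have h6 : Matrix.transpose (A ^ 3) = A ^ 3 := by rw [Matrix.transpose_pow, hAT]
    show (A ^ 3) i j = (A ^ 3) j i
    conv_lhs => rw [← h6]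
    rfl
  -- structural form of Y
  have hiff : ∀ (u v : V) (X : ℝ), (if G.Adj u v then X else 0) = A u v * X := by
    intro u v X
    by_cases h : G.Adj u v <;> simp [hA, SimpleGraph.adjMatrix_apply, h]
  have hY5 : ∀ R : Fin k × V → ℝ, Y R = ∑ u, ∑ v, ∑ l, ∑ i, ∑ j,
      A u v * (R (l, i) * A i u * (R (l, j) * A j v)) := by
    intro R
    rw [hY R]
    refine Finset.sum_congr rfl fun u _ => Finset.sum_congr rfl fun v _ => ?_
    rw [hiff, Finset.mul_sum]
    refine Finset.sum_congr rfl fun l _ => ?_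
    rw [Finset.sum_mul_sum, Finset.mul_sum]
    refine Finset.sum_congr rfl fun i _ => ?_
    rw [Finset.mul_sum]
  have hYB : ∀ R : Fin k × V → ℝ, Y R = ∑ l, ∑ i, ∑ j, B i j * (R (l, i) * R (l, j)) := by
    intro R
    rw [hY5 R, swap5]
    refine Finset.sum_congr rfl fun l _ => Finset.sum_congr rfl fun i _ =>
      Finset.sum_congr rfl fun j _ => ?_
    rw [hB2 i j]
    simp only [Finset.sum_mul]
    exact Finset.sum_congr rfl fun u _ => Finset.sum_congr rfl fun v _ => by ring
  have hYT : ∀ R : Fin k × V → ℝ, Y R = ∑ t : Fin k × V × V,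
      B t.2.1 t.2.2 * (R (t.1, t.2.1) * R (t.1, t.2.2)) := by
    intro R
    rw [hYB R]
    simp only [Fintype.sum_prod_type]
  -- expectation
  have hEY' : ∫ R, Y R ∂ν = ∑ t : Fin k × V × V,
      B t.2.1 t.2.2 * (if t.2.1 = t.2.2 then (1:ℝ) else 0) := by
    rw [integral_congr_ae (Filter.Eventually.of_forall hYT),
      integral_finset_sum _ (fun t _ => (integrable_mul2 _ _).const_mul _)]
    refine Finset.sum_congr rfl fun t _ => ?_
    rw [MeasureTheory.integral_const_mul, E2]
    congr 1
    simp [Prod.ext_iff]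
  have hEY : ∫ R, Y R ∂ν = (k : ℝ) * ∑ i, B i i := by
    rw [hEY']
    simp only [Fintype.sum_prod_type, mul_ite, mul_one, mul_zero]
    simp [Finset.sum_ite_eq, Finset.sum_ite_eq']
  -- Memℒp
  have hml2 : ∀ a b : Fin k × V, MemLp (fun R : Fin k × V → ℝ => R a * R b) 2 ν := by
    intro a b
    rw [memLp_two_iff_integrable_sq
      (((measurable_pi_apply a).mul (measurable_pi_apply b)).aestronglyMeasurable)]
    apply (integrable_mul4 a b a b).congr
    exact Filter.Eventually.of_forall fun R => by ring
  have hYml2 : MemLp Y 2 ν := by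
    have h := memLp_finset_sum' (μ := ν) (p := 2) Finset.univ
      (f := fun (t : Fin k × V × V) (R : Fin k × V → ℝ) =>
        B t.2.1 t.2.2 * (R (t.1, t.2.1) * R (t.1, t.2.2)))
      (fun t _ => (hml2 _ _).const_mul _)
    have hfn : (∑ t : Fin k × V × V, fun (R : Fin k × V → ℝ) =>
        B t.2.1 t.2.2 * (R (t.1, t.2.1) * R (t.1, t.2.2)))
        = fun R => ∑ t : Fin k × V × V, B t.2.1 t.2.2 * (R (t.1, t.2.1) * R (t.1, t.2.2)) := by
      funext R
      simp [Finset.sum_apply]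
    rw [hfn] at h
    exact (memLp_congr_ae (Filter.Eventually.of_forall fun R => (hYT R).symm)).mp h
  -- second moment
  have hsq : ∀ R : Fin k × V → ℝ, Y R ^ 2 = ∑ t : Fin k × V × V, ∑ s : Fin k × V × V,
      B t.2.1 t.2.2 * B s.2.1 s.2.2 *
        (R (t.1, t.2.1) * R (t.1, t.2.2) * R (s.1, s.2.1) * R (s.1, s.2.2)) := by
    intro R
    rw [sq, hYT R, Finset.sum_mul_sum]
    exact Finset.sum_congr rfl fun t _ => Finset.sum_congr rfl fun s _ => by ring
  have hEY2 : ∫ R, Y R ^ 2 ∂ν = ∑ t : Fin k × V × V, ∑ s : Fin k × V × V,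
      B t.2.1 t.2.2 * B s.2.1 s.2.2 *
        ((if (t.1, t.2.1) = (t.1, t.2.2) then (1:ℝ) else 0)
            * (if (s.1, s.2.1) = (s.1, s.2.2) then (1:ℝ) else 0)
          + (if (t.1, t.2.1) = (s.1, s.2.1) then (1:ℝ) else 0)
            * (if (t.1, t.2.2) = (s.1, s.2.2) then (1:ℝ) else 0)
          + (if (t.1, t.2.1) = (s.1, s.2.2) then (1:ℝ) else 0)
            * (if (t.1, t.2.2) = (s.1, s.2.1) then (1:ℝ) else 0)) := by
    rw [integral_congr_ae (Filter.Eventually.of_forall hsq),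
      integral_finset_sum _ (fun t _ => integrable_finset_sum _
        (fun s _ => (integrable_mul4 _ _ _ _).const_mul _))]
    refine Finset.sum_congr rfl fun t _ => ?_
    rw [integral_finset_sum _ (fun s _ => (integrable_mul4 _ _ _ _).const_mul _)]
    refine Finset.sum_congr rfl fun s _ => ?_
    rw [MeasureTheory.integral_const_mul, E4]
  -- split into three sums
  have hsplit : ∫ R, Y R ^ 2 ∂ν =
      (∑ t : Fin k × V × V, B t.2.1 t.2.2 * (if t.2.1 = t.2.2 then (1:ℝ) else 0))
        * (∑ s : Fin k × V × V, B s.2.1 s.2.2 * (if s.2.1 = s.2.2 then (1:ℝ) else 0))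
      + (∑ t : Fin k × V × V, B t.2.1 t.2.2 * B t.2.1 t.2.2)
      + (∑ t : Fin k × V × V, B t.2.1 t.2.2 * B t.2.2 t.2.1) := by
    rw [hEY2]
    have d1 : ∀ t : Fin k × V × V,
        (if (t.1, t.2.1) = (t.1, t.2.2) then (1:ℝ) else 0)
          = if t.2.1 = t.2.2 then (1:ℝ) else 0 := by
      rintro ⟨lt, it, jt⟩
      simp [Prod.ext_iff]
    have d2 : ∀ t s : Fin k × V × V,
        (if (t.1, t.2.1) = (s.1, s.2.1) then (1:ℝ) else 0)
            * (if (t.1, t.2.2) = (s.1, s.2.2) then (1:ℝ) else 0)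
          = if s = t then (1:ℝ) else 0 := by
      rintro ⟨lt, it, jt⟩ ⟨ls, is, js⟩
      simp only [Prod.mk.injEq]
      by_cases h1 : lt = ls <;> by_cases h2 : it = is <;> by_cases h3 : jt = js <;>
        simp [h1, h2, h3, eq_comm]
    have d3 : ∀ t s : Fin k × V × V,
        (if (t.1, t.2.1) = (s.1, s.2.2) then (1:ℝ) else 0)
            * (if (t.1, t.2.2) = (s.1, s.2.1) then (1:ℝ) else 0)
          = if s = (t.1, t.2.2, t.2.1) then (1:ℝ) else 0 := by
      rintro ⟨lt, it, jt⟩ ⟨ls, is, js⟩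
      simp only [Prod.mk.injEq]
      by_cases h1 : lt = ls <;> by_cases h2 : it = js <;> by_cases h3 : jt = is <;>
        simp [h1, h2, h3, eq_comm]
    have e1 : ∀ t s : Fin k × V × V,
        B t.2.1 t.2.2 * B s.2.1 s.2.2 *
        ((if (t.1, t.2.1) = (t.1, t.2.2) then (1:ℝ) else 0)
            * (if (s.1, s.2.1) = (s.1, s.2.2) then (1:ℝ) else 0)
          + (if (t.1, t.2.1) = (s.1, s.2.1) then (1:ℝ) else 0)
            * (if (t.1, t.2.2) = (s.1, s.2.2) then (1:ℝ) else 0)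
          + (if (t.1, t.2.1) = (s.1, s.2.2) then (1:ℝ) else 0)
            * (if (t.1, t.2.2) = (s.1, s.2.1) then (1:ℝ) else 0))
        = (B t.2.1 t.2.2 * (if t.2.1 = t.2.2 then (1:ℝ) else 0))
            * (B s.2.1 s.2.2 * (if s.2.1 = s.2.2 then (1:ℝ) else 0))
          + (B t.2.1 t.2.2 * B s.2.1 s.2.2) * (if s = t then (1:ℝ) else 0)
          + (B t.2.1 t.2.2 * B s.2.1 s.2.2) * (if s = (t.1, t.2.2, t.2.1) then (1:ℝ) else 0) := by
      intro t s
      rw [mul_add, mul_add, d1 t, d1 s, d2 t s, d3 t s]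
      ring
    rw [Finset.sum_congr rfl fun t _ => Finset.sum_congr rfl fun s _ => e1 t s]
    simp only [Finset.sum_add_distrib]
    congr 1
    · congr 1
      · rw [← Finset.sum_mul_sum]
      · refine Finset.sum_congr rfl fun t _ => ?_
        simp only [mul_ite, mul_one, mul_zero, Finset.sum_ite_eq']
        simp
    · refine Finset.sum_congr rfl fun t _ => ?_
      simp only [mul_ite, mul_one, mul_zero, Finset.sum_ite_eq']
      simp
  -- collapse the diagonal sums
  have hsum2 : (∑ t : Fin k × V × V, B t.2.1 t.2.2 * B t.2.1 t.2.2)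
      = (k : ℝ) * ∑ i, ∑ j, B i j ^ 2 := by
    simp only [Fintype.sum_prod_type, ← sq]
    simp [Finset.sum_const, Finset.card_univ, nsmul_eq_mul]
  have hsum3 : (∑ t : Fin k × V × V, B t.2.1 t.2.2 * B t.2.2 t.2.1)
      = (k : ℝ) * ∑ i, ∑ j, B i j ^ 2 := by
    have : ∀ t : Fin k × V × V, B t.2.1 t.2.2 * B t.2.2 t.2.1 = B t.2.1 t.2.2 ^ 2 := by
      intro t; rw [← hBsym, sq]
    rw [Finset.sum_congr rfl fun t _ => this t]
    simp only [Fintype.sum_prod_type]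
    simp [Finset.sum_const, Finset.card_univ, nsmul_eq_mul]
  -- variance
  have hvar : variance Y ν = 2 * (k : ℝ) * ∑ i, ∑ j, B i j ^ 2 := by
    rw [variance_eq_sub hYml2]
    have hpow : (∫ R, (Y ^ 2) R ∂ν) = ∫ R, Y R ^ 2 ∂ν := by
      refine integral_congr_ae (Filter.Eventually.of_forall fun R => ?_)
      simp
    show (∫ R, (Y ^ 2) R ∂ν) - (∫ R, Y R ∂ν) ^ 2 = _
    rw [hpow, hsplit, hsum2, hsum3, hEY', sq]
    ring
  constructor
  · exact hvar
  · rw [hvar]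
    have htr : Matrix.trace (A ^ 6) = ∑ i, ∑ j, B i j ^ 2 := by
      have h6 : A ^ 6 = A ^ 3 * A ^ 3 := by rw [← pow_add]
      rw [Matrix.trace, h6]
      refine Finset.sum_congr rfl fun i _ => ?_
      rw [Matrix.diag_apply, Matrix.mul_apply]
      refine Finset.sum_congr rfl fun j _ => ?_
      rw [show (A ^ 3) j i = B j i from rfl, ← hBsym, sq]
    rw [htr]
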